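/- Let p be a prime, e = p^k, n ≥ 1, and η the homogeneous element η(x̃₁,...,x̃ₙ) = Σ_{i=1}^n x̃ᵢ^{⊗e} of degree e in the free associative F_p-algebra on x̃₁,...,x̃ₙ (i.e. in the degree-e part of the tensor algebra of F_p^n). Suppose B = (b_{ij}) is an n × m matrix over F_p of rank m such that η(Σ_j b_{1j} ỹⱼ, ..., Σ_j b_{nj} ỹⱼ) = 0 in the tensor algebra on ỹ₁,...,ỹ_m. Then for all s, t ∈ {1,...,m}, Σ_{i=1}^n b_{is}^{e−1} b_{it} = 0, i.e. C·B = 0 where C is the m × n matrix with entries c_{si} = b_{is}^{e−1}; consequently m ≤ n/2. -/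

import Mathlib

open Finset Matrix

section
variable {p : ℕ} [Fact p.Prime]

private def Sdiag {R : Type*} [CommRing R] (e : ℕ) (d : ℕ → R) :
    Matrix (Fin (e+1)) (Fin (e+1)) R :=
  Matrix.of fun i j => if (j : ℕ) = (i : ℕ) + 1 then d (i : ℕ) else 0

private lemma Sdiag_pow {R : Type*} [CommRing R] (e : ℕ) (d : ℕ → R) (L : ℕ) :
    ∀ i j : Fin (e+1), (Sdiag e d ^ L) i j =
      if (j : ℕ) = (i : ℕ) + L then ∏ l ∈ Finset.range L, d ((i : ℕ) + l) else 0 := by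
  induction L with
  | zero =>
    intro i j
    simp only [pow_zero, Matrix.one_apply, Nat.add_zero, Finset.range_zero,
      Finset.prod_empty]
    by_cases h : i = j
    · subst h; simp
    · rw [if_neg h, if_neg]
      intro hc
      exact h (Fin.ext hc.symm)
  | succ L IH =>
    intro i j
    rw [pow_succ']
    rw [Matrix.mul_apply]
    by_cases hle : (i : ℕ) + 1 ≤ e
    · set r₀ : Fin (e+1) := ⟨(i : ℕ) + 1, by omega⟩ with hr₀
      have hcond : ∀ r : Fin (e+1), ((r : ℕ) = (i : ℕ) + 1) = (r = r₀) := by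
        intro r
        simp [Fin.ext_iff, hr₀]
      have hterm : ∀ r : Fin (e+1),
          Sdiag e d i r * (Sdiag e d ^ L) r j =
          if r = r₀ then d (i : ℕ) * (Sdiag e d ^ L) r j else 0 := by
        intro r
        simp only [Sdiag, Matrix.of_apply, ← hcond r]
        by_cases h : (r : ℕ) = (i : ℕ) + 1 <;> simp [h]
      rw [Finset.sum_congr rfl (fun r _ => hterm r), Finset.sum_ite_eq' Finset.univ r₀]
      simp only [Finset.mem_univ, if_true]
      rw [IH r₀ j]
      have hr0v : (r₀ : ℕ) = (i : ℕ) + 1 := rfl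
      rw [hr0v]
      by_cases hj : (j : ℕ) = (i : ℕ) + 1 + L
      · rw [if_pos hj, if_pos (by omega)]
        rw [Finset.prod_range_succ']
        have : ∀ l, (i : ℕ) + (l + 1) = (i : ℕ) + 1 + l := fun l => by omega
        rw [mul_comm]
        congr 1
        exact Finset.prod_congr rfl fun l _ => by rw [this l]
      · rw [if_neg hj, if_neg (by omega), mul_zero]
    · have hi : (i : ℕ) = e := by have := i.isLt; omega
      rw [if_neg (by have := j.isLt; omega)]
      apply Finset.sum_eq_zero
      intro r _
      have : Sdiag e d i r = 0 := by
        simp only [Sdiag, Matrix.of_apply]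
        rw [if_neg (by have := r.isLt; omega)]
      rw [this, zero_mul]

private lemma master {n m e : ℕ} (B : Matrix (Fin n) (Fin m) (ZMod p))
    (hsub : (FreeAlgebra.lift (ZMod p)
        (fun i : Fin n => ∑ j : Fin m, B i j • FreeAlgebra.ι (ZMod p) j))
        (∑ i : Fin n, FreeAlgebra.ι (ZMod p) i ^ e) = 0)
    (d : Fin m → ℕ → ZMod p) :
    ∑ i : Fin n, ∏ l ∈ Finset.range e, (∑ j : Fin m, B i j * d j l) = 0 := by
  have h0 : (FreeAlgebra.lift (ZMod p) (fun j : Fin m => Sdiag e (d j)))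
      ((FreeAlgebra.lift (ZMod p)
      (fun i : Fin n => ∑ j : Fin m, B i j • FreeAlgebra.ι (ZMod p) j))
      (∑ i : Fin n, FreeAlgebra.ι (ZMod p) i ^ e)) = 0 := by rw [hsub, map_zero]
  have hgen : ∀ i : Fin n,
      (FreeAlgebra.lift (ZMod p) (fun j : Fin m => Sdiag e (d j)))
      ((FreeAlgebra.lift (ZMod p)
        (fun i : Fin n => ∑ j : Fin m, B i j • FreeAlgebra.ι (ZMod p) j))
        (FreeAlgebra.ι (ZMod p) i)) = Sdiag e (fun l => ∑ j : Fin m, B i j * d j l) := by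
    intro i
    rw [FreeAlgebra.lift_ι_apply, map_sum]
    ext i' j'
    simp only [_root_.map_smul, FreeAlgebra.lift_ι_apply, Matrix.sum_apply, Matrix.smul_apply,
      Sdiag, Matrix.of_apply, smul_eq_mul, mul_ite, mul_zero]
    by_cases h : (j' : ℕ) = (i' : ℕ) + 1 <;> simp [h]
  rw [map_sum, map_sum] at h0
  simp only [map_pow, hgen] at h0
  have h1 := congrFun (congrFun h0 0) (Fin.last e)
  rw [Matrix.sum_apply, Matrix.zero_apply] at h1
  simp only [Sdiag_pow] at h1
  simpa using h1
end

theorem stmt16 (p k e n m : ℕ) [Fact p.Prime] (hk : 1 ≤ k) (he : e = p ^ k)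
    (hn : 1 ≤ n) (B : Matrix (Fin n) (Fin m) (ZMod p))
    (hrank : B.rank = m)
    (hsub : (FreeAlgebra.lift (ZMod p)
        (fun i : Fin n => ∑ j : Fin m, B i j • FreeAlgebra.ι (ZMod p) j))
        (∑ i : Fin n, FreeAlgebra.ι (ZMod p) i ^ e) = 0) :
    (∀ s t : Fin m, ∑ i : Fin n, B i s ^ (e - 1) * B i t = 0) ∧
    (Matrix.of (fun (s : Fin m) (i : Fin n) => B i s ^ (e - 1))) * B = 0 ∧
    2 * m ≤ n := by
  have hp2 : 2 ≤ p := (Fact.out : p.Prime).two_le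
  have he2 : 2 ≤ e := by
    rw [he]
    calc 2 ≤ p := hp2
    _ = p ^ 1 := (pow_one p).symm
    _ ≤ p ^ k := Nat.pow_le_pow_right (by omega) hk
  -- the generalized relations
  have key2 : ∀ (lam : Fin m → ZMod p) (t : Fin m),
      ∑ i : Fin n, (∑ j : Fin m, B i j * lam j) ^ (e - 1) * B i t = 0 := by
    intro lam t
    have := master B hsub (fun j l => if l + 1 < e then lam j else if j = t then 1 else 0)
    have hinner : ∀ i (l : ℕ),
        (∑ j : Fin m, B i j * (if l + 1 < e then lam j else if j = t then 1 else 0))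
        = if l + 1 < e then ∑ j : Fin m, B i j * lam j else B i t := by
      intro i l
      by_cases h : l + 1 < e
      · simp [h]
      · simp [h, mul_ite, mul_one, mul_zero, Finset.sum_ite_eq']
    simp only [hinner] at this
    have hprod : ∀ i : Fin n,
        (∏ l ∈ Finset.range e, (if l + 1 < e then ∑ j : Fin m, B i j * lam j else B i t))
        = (∑ j : Fin m, B i j * lam j) ^ (e - 1) * B i t := by
      intro i
      have hee : e = (e - 1) + 1 := by omega
      conv_lhs => rw [hee]
      rw [Finset.prod_range_succ]
      congr 1
      · rw [Finset.prod_congr rfl (fun l hl => if_pos (by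
          have := Finset.mem_range.mp hl; omega)), Finset.prod_const, Finset.card_range]
      · rw [if_neg (by omega)]
    rwa [Finset.sum_congr rfl (fun i _ => hprod i)] at this
  have key1 : ∀ s t : Fin m, ∑ i : Fin n, B i s ^ (e - 1) * B i t = 0 := by
    intro s t
    have := key2 (fun j => if j = s then 1 else 0) t
    simpa [mul_ite, mul_one, mul_zero, Finset.sum_ite_eq'] using this
  refine ⟨key1, ?_, ?_⟩
  · ext s t
    rw [Matrix.mul_apply, Matrix.zero_apply]
    simpa using key1 s t
  -- rank argument
  · classical
    have hm_le : 1 ≤ e - 1 := by omega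
    -- rows of B span (ZMod p)^m
    have hrT : (Bᵀ).rank = m := by rw [Matrix.rank_transpose, hrank]
    have hrange_top : LinearMap.range (Bᵀ).mulVecLin = ⊤ := by
      apply Submodule.eq_top_of_finrank_eq
      rw [show Module.finrank (ZMod p) (LinearMap.range (Bᵀ).mulVecLin) = (Bᵀ).rank from rfl,
        hrT, Module.finrank_fintype_fun_eq_card, Fintype.card_fin]
    have hspan : Submodule.span (ZMod p) (Set.range B) = ⊤ := by
      rw [← hrange_top, Matrix.range_mulVecLin]; rfl
    obtain ⟨tset, hts, htspan, htind⟩ :=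
      exists_linearIndependent (ZMod p) (Set.range B)
    haveI : Fintype tset := ((Set.finite_range B).subset hts).fintype
    let b : Module.Basis tset (ZMod p) (Fin m → ZMod p) :=
      Module.Basis.mk htind (by rw [Subtype.range_coe, htspan, hspan])
    have hcard : Fintype.card tset = m := by
      rw [← Module.finrank_eq_card_basis b, Module.finrank_fintype_fun_eq_card,
        Fintype.card_fin]
    let eqv : Fin m ≃ tset := (Fintype.equivFinOfCardEq hcard).symm
    let b' : Module.Basis (Fin m) (ZMod p) (Fin m → ZMod p) := b.reindex eqv.symm
    have hb' : ∀ q : Fin m, b' q = ((eqv q : Fin m → ZMod p)) := by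
      intro q
      simp [b', b, Module.Basis.reindex_apply, Module.Basis.mk_apply]
    have hsel : ∀ q : Fin m, ∃ i : Fin n, B i = ((eqv q : Fin m → ZMod p)) :=
      fun q => hts (eqv q).2
    choose idx hidx using hsel
    let lam : Fin m → Fin m → ZMod p :=
      fun q j => b'.coord q (fun j' => if j = j' then 1 else 0)
    have hpair : ∀ (x : Fin m → ZMod p) (q : Fin m),
        ∑ j : Fin m, x j * lam q j = b'.coord q x := by
      intro x q
      rw [LinearMap.pi_apply_eq_sum_univ (b'.coord q) x]
      simp [lam, smul_eq_mul]
    have hdual : ∀ pq q : Fin m,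
        ∑ j : Fin m, B (idx pq) j * lam q j = if pq = q then 1 else 0 := by
      intro pq q
      rw [hpair (B (idx pq)) q, hidx pq, ← hb' pq, Module.Basis.coord_apply, Module.Basis.repr_self,
        Finsupp.single_apply]
    let u : Fin m → (Fin n → ZMod p) :=
      fun q i => (∑ j : Fin m, B i j * lam q j) ^ (e - 1)
    have hu_mem : ∀ q : Fin m, u q ∈ LinearMap.ker (Bᵀ).mulVecLin := by
      intro q
      rw [LinearMap.mem_ker]
      funext t
      rw [Matrix.mulVecLin_apply]
      show ∑ i : Fin n, Bᵀ t i * u q i = 0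
      have := key2 (lam q) t
      rw [← this]
      exact Finset.sum_congr rfl fun i _ => by
        rw [Matrix.transpose_apply]; ring
    have hind : LinearIndependent (ZMod p) u := by
      rw [Fintype.linearIndependent_iff]
      intro g hg q
      have := congrFun hg (idx q)
      have hval : ∀ q' : Fin m, u q' (idx q) = if q = q' then 1 else 0 := by
        intro q'
        show (∑ j : Fin m, B (idx q) j * lam q' j) ^ (e - 1) = _
        rw [hdual q q']
        by_cases h : q = q'
        · simp [h]
        · simp [h, zero_pow (by omega : e - 1 ≠ 0)]
      rw [Finset.sum_apply] at this
      simp only [Pi.smul_apply, smul_eq_mul, hval, mul_ite, mul_one, mul_zero] at this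
      rwa [Finset.sum_ite_eq Finset.univ q g, if_pos (Finset.mem_univ q)] at this
    let w : Fin m → LinearMap.ker (Bᵀ).mulVecLin := fun q => ⟨u q, hu_mem q⟩
    have hindw : LinearIndependent (ZMod p) w :=
      LinearIndependent.of_comp (LinearMap.ker (Bᵀ).mulVecLin).subtype hind
    have hmle : m ≤ Module.finrank (ZMod p) (LinearMap.ker (Bᵀ).mulVecLin) := by
      have := hindw.fintype_card_le_finrank
      rwa [Fintype.card_fin] at this
    have hrn := LinearMap.finrank_range_add_finrank_ker (Bᵀ).mulVecLin
    rw [show Module.finrank (ZMod p) (LinearMap.range (Bᵀ).mulVecLin) = (Bᵀ).rank from rfl,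
      hrT, Module.finrank_fintype_fun_eq_card, Fintype.card_fin] at hrn
    omega
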